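/- Let A ∈ ℝ^{n×n}, B ∈ ℝ^{n×1}, and let H ∈ ℝ^{1×n} be a row vector. Suppose Y ∈ ℝ^{n×n} is symmetric positive definite and S ∈ ℝ^{n×n} is symmetric positive definite with A^⊤S + SA = −Y. If 2‖SB‖·‖H‖ < λ_min(Y), where λ_min(Y) is the smallest eigenvalue of Y and ‖·‖ denotes the spectral (operator 2-) norm, then the matrix A + BH is Hurwitz. -/

import Mathlib

open Matrix
noncomputable section

/-- A real square matrix is Hurwitz if every complex eigenvalue has strictly negative
real part. -/
def IsHurwitz {ι : Type*} [Fintype ι] (M : Matrix ι ι ℝ) : Prop :=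
  ∀ (μ : ℂ) (v : ι → ℂ), v ≠ 0 → (M.map Complex.ofReal) *ᵥ v = μ • v → μ.re < 0

/-- Spectral norm: operator norm induced by the Euclidean norms. -/
def opNorm {m n : Type*} [Fintype m] [Fintype n] [DecidableEq n] (M : Matrix m n ℝ) : ℝ :=
  ‖(Matrix.toEuclideanLin M).toContinuousLinearMap‖

namespace HurwitzAux

variable {n m : ℕ}

/-- Euclidean norm of a plain vector. -/
def enorm (x : Fin n → ℝ) : ℝ := ‖(WithLp.equiv 2 (Fin n → ℝ)).symm x‖

lemma enorm_nonneg (x : Fin n → ℝ) : 0 ≤ enorm x := norm_nonneg _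

lemma norm_mulVec_le (M : Matrix (Fin m) (Fin n) ℝ) (x : Fin n → ℝ) :
    enorm (M *ᵥ x) ≤ opNorm M * enorm x := by
  have h := (Matrix.toEuclideanLin M).toContinuousLinearMap.le_opNorm
    ((WithLp.equiv 2 (Fin n → ℝ)).symm x)
  simpa [enorm, opNorm, Matrix.toEuclideanLin_apply_piLp_toLp] using h

lemma dot_eq_inner (x y : Fin n → ℝ) :
    x ⬝ᵥ y = inner ℝ ((WithLp.equiv 2 (Fin n → ℝ)).symm x) ((WithLp.equiv 2 (Fin n → ℝ)).symm y) := by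
  rw [EuclideanSpace.inner_eq_star_dotProduct]
  simp [dotProduct, mul_comm]

lemma abs_dot_le (x y : Fin n → ℝ) : |x ⬝ᵥ y| ≤ enorm x * enorm y := by
  rw [dot_eq_inner]
  exact abs_real_inner_le_norm _ _

lemma dot_self_eq (x : Fin n → ℝ) : x ⬝ᵥ x = enorm x ^ 2 := by
  rw [dot_eq_inner, real_inner_self_eq_norm_sq]; rfl

lemma dot_self_pos {x : Fin n → ℝ} (hx : x ≠ 0) : 0 < x ⬝ᵥ x := by
  obtain ⟨i, hi⟩ := Function.ne_iff.mp hx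
  have hi' : x i ≠ 0 := by simpa using hi
  have h2 : 0 < x i * x i := mul_self_pos.mpr hi'
  have h1 : x i * x i ≤ ∑ j, x j * x j :=
    Finset.single_le_sum (fun j _ => mul_self_nonneg (x j)) (Finset.mem_univ i)
  simpa [dotProduct] using h2.trans_le h1

lemma eig_bound [Nonempty (Fin n)] {Y : Matrix (Fin n) (Fin n) ℝ} (hA : Y.IsHermitian)
    (x : Fin n → ℝ) : (⨅ i, hA.eigenvalues i) * (x ⬝ᵥ x) ≤ x ⬝ᵥ Y *ᵥ x := by
  set U : Matrix (Fin n) (Fin n) ℝ := (hA.eigenvectorUnitary : Matrix (Fin n) (Fin n) ℝ) with hU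
  have hUU : U * star U = 1 := (Matrix.mem_unitaryGroup_iff).mp hA.eigenvectorUnitary.2
  set w : Fin n → ℝ := Uᵀ *ᵥ x with hw
  have hstar : star U = Uᵀ := by
    rw [Matrix.star_eq_conjTranspose, Matrix.conjTranspose_eq_transpose_of_trivial]
  have hxw : U *ᵥ w = x := by
    rw [hw, Matrix.mulVec_mulVec, ← hstar, hUU, Matrix.one_mulVec]
  have hquad : x ⬝ᵥ Y *ᵥ x = ∑ i, hA.eigenvalues i * (w i)^2 := by
    conv_lhs => rw [hA.spectral_theorem, Unitary.conjStarAlgAut_apply]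
    rw [← Matrix.mulVec_mulVec, ← Matrix.mulVec_mulVec, Matrix.dotProduct_mulVec (R := ℝ),
      ← Matrix.mulVec_transpose, hstar, ← hw]
    simp [dotProduct, Matrix.mulVec_diagonal]
    exact Finset.sum_congr rfl fun i _ => by ring
  have hxx : x ⬝ᵥ x = ∑ i, (w i)^2 := by
    have h : x ⬝ᵥ x = w ⬝ᵥ w := by
      conv_lhs => rw [← hxw]
      rw [Matrix.dotProduct_mulVec (R := ℝ), ← Matrix.mulVec_transpose, ← hstar,
        Matrix.mulVec_mulVec]
      rw [show star U * U = 1 from (Matrix.mem_unitaryGroup_iff').mp hA.eigenvectorUnitary.2,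
        Matrix.one_mulVec]
    rw [h]
    simp [dotProduct, sq]
  rw [hquad, hxx, Finset.mul_sum]
  refine Finset.sum_le_sum fun i _ => ?_
  exact mul_le_mul_of_nonneg_right
    (ciInf_le (Set.Finite.bddBelow (Set.finite_range _)) i) (sq_nonneg _)

end HurwitzAux

/-- if `A^⊤S + SA = −Y` with `S, Y` symmetric positive definite and
`2‖SB‖‖H‖ < λ_min(Y)`, then `A + BH` is Hurwitz. -/
theorem hurwitz_of_small_output_injection
    (n : ℕ) (A : Matrix (Fin n) (Fin n) ℝ) (B : Matrix (Fin n) (Fin 1) ℝ)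
    (H : Matrix (Fin 1) (Fin n) ℝ)
    (Y S : Matrix (Fin n) (Fin n) ℝ) (hY : Y.PosDef) (hS : S.PosDef)
    (hLyap : Aᵀ * S + S * A = -Y)
    (hsmall : 2 * opNorm (S * B) * opNorm H < ⨅ i, hY.1.eigenvalues i) :
    IsHurwitz (A + B * H) := by
  intro μ v hv hev
  obtain ⟨j0, hj0⟩ := Function.ne_iff.mp hv
  haveI : Nonempty (Fin n) := ⟨j0⟩
  set M : Matrix (Fin n) (Fin n) ℝ := A + B * H with hMdef
  set a : Fin n → ℝ := fun i => (v i).re with hadef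
  set b : Fin n → ℝ := fun i => (v i).im with hbdef
  have ha : M *ᵥ a = μ.re • a - μ.im • b := by
    funext j
    have h := congrArg Complex.re (congrFun hev j)
    simpa [Matrix.mulVec, dotProduct, Complex.mul_re, a, b] using h
  have hb : M *ᵥ b = μ.im • a + μ.re • b := by
    funext j
    have h := congrArg Complex.im (congrFun hev j)
    simpa [Matrix.mulVec, dotProduct, Complex.mul_im, a, b, add_comm] using h
  have hSt : Sᵀ = S := by
    rw [← Matrix.conjTranspose_eq_transpose_of_trivial]; exact hS.1
  have symm_dot : ∀ x y : Fin n → ℝ, x ⬝ᵥ S *ᵥ y = y ⬝ᵥ S *ᵥ x := by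
    intro x y
    conv_lhs => rw [Matrix.dotProduct_mulVec, ← hSt, Matrix.vecMul_transpose,
      dotProduct_comm]
  have hG : ∀ x : Fin n → ℝ, x ⬝ᵥ (Mᵀ * S + S * M) *ᵥ x = 2 * ((M *ᵥ x) ⬝ᵥ (S *ᵥ x)) := by
    intro x
    rw [Matrix.add_mulVec, dotProduct_add, ← Matrix.mulVec_mulVec,
      ← Matrix.mulVec_mulVec, Matrix.dotProduct_mulVec (v := x), Matrix.vecMul_transpose,
      symm_dot x (M *ᵥ x), two_mul]
  set P : Matrix (Fin n) (Fin n) ℝ := S * (B * H) with hPdef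
  have hM : Mᵀ * S + S * M = -Y + (Pᵀ + P) := by
    have h1 : Mᵀ * S + S * M = (Aᵀ * S + S * A) + ((B * H)ᵀ * S + S * (B * H)) := by
      rw [hMdef, Matrix.transpose_add, Matrix.add_mul, Matrix.mul_add]
      abel
    have h2 : (B * H)ᵀ * S = Pᵀ := by
      simp [hPdef, Matrix.transpose_mul, hSt]
    rw [h1, hLyap, h2, ← hPdef]
  have hPtr : ∀ x : Fin n → ℝ, x ⬝ᵥ Pᵀ *ᵥ x = x ⬝ᵥ P *ᵥ x := by
    intro x
    rw [Matrix.dotProduct_mulVec, Matrix.vecMul_transpose, dotProduct_comm]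
  have eqa : 2 * (μ.re * (a ⬝ᵥ S *ᵥ a) - μ.im * (b ⬝ᵥ S *ᵥ a))
      = -(a ⬝ᵥ Y *ᵥ a) + 2 * (a ⬝ᵥ P *ᵥ a) := by
    have h1 := hG a
    rw [ha, sub_dotProduct, smul_dotProduct, smul_dotProduct,
      smul_eq_mul, smul_eq_mul] at h1
    rw [← h1, hM, Matrix.add_mulVec, dotProduct_add, Matrix.add_mulVec,
      dotProduct_add, Matrix.neg_mulVec, dotProduct_neg, hPtr]
    ring
  have eqb : 2 * (μ.im * (a ⬝ᵥ S *ᵥ b) + μ.re * (b ⬝ᵥ S *ᵥ b))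
      = -(b ⬝ᵥ Y *ᵥ b) + 2 * (b ⬝ᵥ P *ᵥ b) := by
    have h1 := hG b
    rw [hb, add_dotProduct, smul_dotProduct, smul_dotProduct,
      smul_eq_mul, smul_eq_mul] at h1
    rw [← h1, hM, Matrix.add_mulVec, dotProduct_add, Matrix.add_mulVec,
      dotProduct_add, Matrix.neg_mulVec, dotProduct_neg, hPtr]
    ring
  have key : 2 * μ.re * (a ⬝ᵥ S *ᵥ a + b ⬝ᵥ S *ᵥ b)
      = -(a ⬝ᵥ Y *ᵥ a + b ⬝ᵥ Y *ᵥ b) + 2 * (a ⬝ᵥ P *ᵥ a + b ⬝ᵥ P *ᵥ b) := by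
    linear_combination eqa + eqb - (2 * μ.im) * symm_dot a b
  -- eigenvalue bound
  have hbYa := HurwitzAux.eig_bound hY.1 a
  have hbYb := HurwitzAux.eig_bound hY.1 b
  -- norm bound on P
  have hP : ∀ x : Fin n → ℝ, x ⬝ᵥ P *ᵥ x ≤ opNorm (S * B) * opNorm H * (x ⬝ᵥ x) := by
    intro x
    have h1 : P *ᵥ x = (S * B) *ᵥ (H *ᵥ x) := by
      rw [Matrix.mulVec_mulVec, hPdef, Matrix.mul_assoc]
    have h2 : x ⬝ᵥ P *ᵥ x ≤ HurwitzAux.enorm x * HurwitzAux.enorm ((S * B) *ᵥ (H *ᵥ x)) := by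
      rw [h1]; exact (le_abs_self _).trans (HurwitzAux.abs_dot_le _ _)
    have h3 : HurwitzAux.enorm ((S * B) *ᵥ (H *ᵥ x)) ≤ opNorm (S * B) * (opNorm H * HurwitzAux.enorm x) :=
      (HurwitzAux.norm_mulVec_le _ _).trans
        (mul_le_mul_of_nonneg_left (HurwitzAux.norm_mulVec_le _ _) (norm_nonneg _))
    have h4 := HurwitzAux.enorm_nonneg x
    have h5 : x ⬝ᵥ x = HurwitzAux.enorm x ^ 2 := HurwitzAux.dot_self_eq x
    calc x ⬝ᵥ P *ᵥ x ≤ HurwitzAux.enorm x * (opNorm (S * B) * (opNorm H * HurwitzAux.enorm x)) :=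
          h2.trans (mul_le_mul_of_nonneg_left h3 h4)
      _ = opNorm (S * B) * opNorm H * (x ⬝ᵥ x) := by rw [h5]; ring
  have hPa := hP a
  have hPb := hP b
  -- positivity of the Lyapunov form
  have hab : a ≠ 0 ∨ b ≠ 0 := by
    by_contra hcon
    push_neg at hcon
    apply hj0
    have h1 := congrFun hcon.1 j0
    have h2 := congrFun hcon.2 j0
    simp only [a, b, Pi.zero_apply] at h1 h2
    exact Complex.ext h1 h2
  have hSa : 0 ≤ a ⬝ᵥ S *ᵥ a := by
    simpa using hS.posSemidef.dotProduct_mulVec_nonneg a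
  have hSb : 0 ≤ b ⬝ᵥ S *ᵥ b := by
    simpa using hS.posSemidef.dotProduct_mulVec_nonneg b
  have hq : 0 < a ⬝ᵥ S *ᵥ a + b ⬝ᵥ S *ᵥ b := by
    rcases hab with h | h
    · have := hS.dotProduct_mulVec_pos h; simp only [star_trivial] at this; linarith
    · have := hS.dotProduct_mulVec_pos h; simp only [star_trivial] at this; linarith
  have haa : 0 ≤ a ⬝ᵥ a := by rw [HurwitzAux.dot_self_eq]; positivity
  have hbb : 0 ≤ b ⬝ᵥ b := by rw [HurwitzAux.dot_self_eq]; positivity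
  have habpos : 0 < a ⬝ᵥ a + b ⬝ᵥ b := by
    rcases hab with h | h
    · have := HurwitzAux.dot_self_pos h; linarith
    · have := HurwitzAux.dot_self_pos h; linarith
  set lam := ⨅ i, hY.1.eigenvalues i with hlam
  have hfin : 2 * μ.re * (a ⬝ᵥ S *ᵥ a + b ⬝ᵥ S *ᵥ b)
      ≤ (2 * opNorm (S * B) * opNorm H - lam) * (a ⬝ᵥ a + b ⬝ᵥ b) := by
    rw [key]; nlinarith [hbYa, hbYb, hPa, hPb]
  have hneg : (2 * opNorm (S * B) * opNorm H - lam) * (a ⬝ᵥ a + b ⬝ᵥ b) < 0 :=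
    mul_neg_of_neg_of_pos (by linarith [hsmall]) habpos
  by_contra hcon
  push_neg at hcon
  nlinarith [hq, hfin, hneg]
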